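/- For an integer a, define X_a : ℝ → ℂ by X_a(ξ) = −∫_{−1/2+ξ/2}^{1/2−ξ/2} e^{2πiax} dx − ∫_{3/4}^{3/4+ξ/2} e^{2πiax} dx − ∫_{−3/4−ξ/2}^{−3/4} e^{2πiax} dx. Then for every integer p ≥ 1, the p-th derivative of X_a at ξ = 0 equals ((iπa)^{p−1}/2) · [ (1 − (−1)^p)·(−1)^a + (−1)^p·i^a − (−i)^a ], with the convention (iπa)^0 = 1 (including when a = 0). -/

import Mathlib

open Complex intervalIntegral

private lemma hasDerivAt_cexp_mul (m : ℂ) (x : ℝ) :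
    HasDerivAt (fun ξ : ℝ => Complex.exp (m * ξ)) (m * Complex.exp (m * x)) x := by
  have h1 : HasDerivAt (fun ξ : ℝ => m * (ξ : ℂ)) m x := by
    have := ((hasDerivAt_id (x : ℂ)).const_mul m).comp_ofReal; rw [mul_one] at this; exact this
  have := (Complex.hasDerivAt_exp (m * x)).comp x h1; rw [mul_comm] at this; exact this

private lemma iter_aux (A B C k : ℂ) : ∀ p : ℕ,
    iteratedDeriv p (fun ξ : ℝ => A * Complex.exp (k * ξ) + B * Complex.exp (-k * ξ) + C)
    = fun ξ : ℝ => A * k ^ p * Complex.exp (k * ξ) + B * (-k) ^ p * Complex.exp (-k * ξ)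
        + (if p = 0 then C else 0) := by
  intro p
  induction p with
  | zero =>
    funext ξ
    simp [iteratedDeriv_zero]
  | succ n ih =>
    rw [iteratedDeriv_succ, ih]
    funext x
    have h1 := (hasDerivAt_cexp_mul k x).const_mul (A * k ^ n)
    have h2 := (hasDerivAt_cexp_mul (-k) x).const_mul (B * (-k) ^ n)
    have h := ((h1.add h2).add_const (if n = 0 then C else 0)).deriv
    simp only [Pi.add_apply] at h
    rw [h]
    simp only [Nat.succ_ne_zero, if_false, pow_succ]
    ring

/-- The `ξ`-derivatives at `0` of the moments along the first trajectory to the ground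
state. -/
theorem trajectory_moment_derivatives (a : ℤ) (Xa : ℝ → ℂ)
    (hX : ∀ ξ : ℝ, Xa ξ =
      -(∫ x in (-1/2 + ξ/2 : ℝ)..(1/2 - ξ/2 : ℝ),
          Complex.exp (2 * Real.pi * I * (a : ℂ) * (x : ℂ)))
      - (∫ x in (3/4 : ℝ)..(3/4 + ξ/2 : ℝ),
          Complex.exp (2 * Real.pi * I * (a : ℂ) * (x : ℂ)))
      - (∫ x in (-3/4 - ξ/2 : ℝ)..(-3/4 : ℝ),
          Complex.exp (2 * Real.pi * I * (a : ℂ) * (x : ℂ)))) :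
    ∀ p : ℕ, 1 ≤ p →
      iteratedDeriv p Xa 0 =
        (I * Real.pi * (a : ℂ)) ^ (p - 1) / 2 *
          ((1 - (-1 : ℂ) ^ p) * (-1 : ℂ) ^ a + (-1 : ℂ) ^ p * I ^ a - (-I) ^ a) := by
  intro p hp
  obtain ⟨n, rfl⟩ : ∃ n, p = n + 1 := ⟨p - 1, (Nat.succ_pred_eq_of_pos hp).symm⟩
  by_cases ha : a = 0
  · subst ha
    have hXa : Xa = fun ξ : ℝ => (0:ℂ) * Complex.exp (1 * ξ)
        + 0 * Complex.exp (-1 * ξ) + (-1) := by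
      funext ξ
      rw [hX ξ]
      simp only [Int.cast_zero, mul_zero, zero_mul, Complex.exp_zero,
        intervalIntegral.integral_const]
      simp [Complex.real_smul]
      ring
    rw [hXa, iter_aux]
    simp only [Nat.succ_ne_zero, if_false, zero_mul, add_zero, zero_add]
    rw [zpow_zero, zpow_zero, zpow_zero]
    ring
  · set k : ℂ := I * (Real.pi : ℂ) * (a : ℂ) with hk_def
    have hπ : (Real.pi : ℂ) ≠ 0 := Complex.ofReal_ne_zero.mpr Real.pi_ne_zero
    have haC : (a : ℂ) ≠ 0 := Int.cast_ne_zero.mpr ha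
    have hk : k ≠ 0 := by
      simp [hk_def, I_ne_zero, hπ, haC]
    have hc : (2 * (Real.pi : ℂ) * I * (a : ℂ)) ≠ 0 := by
      simp [I_ne_zero, hπ, haC]
    have key : ∀ z w : ℂ, Complex.exp z = w →
        Complex.exp ((a : ℂ) * z) = w ^ a := by
      intro z w h
      rw [Complex.exp_int_mul, h]
    have hIexp : Complex.exp ((Real.pi : ℂ) / 2 * I) = I := by
      rw [show ((Real.pi : ℂ) / 2) = ((Real.pi / 2 : ℝ) : ℂ) by push_cast; ring,
        Complex.exp_mul_I, ← Complex.ofReal_cos, ← Complex.ofReal_sin,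
        Real.cos_pi_div_two, Real.sin_pi_div_two]
      simp
    have hm1 : Complex.exp ((a : ℂ) * ((Real.pi : ℂ) * I)) = (-1 : ℂ) ^ a :=
      key _ _ Complex.exp_pi_mul_I
    have hm2 : Complex.exp ((a : ℂ) * (-((Real.pi : ℂ) * I))) = (-1 : ℂ) ^ a :=
      key _ _ (by rw [Complex.exp_neg, Complex.exp_pi_mul_I]; norm_num)
    have hm3 : Complex.exp ((a : ℂ) * ((Real.pi : ℂ) * I + (Real.pi : ℂ) / 2 * I))
        = (-I) ^ a :=
      key _ _ (by rw [Complex.exp_add, Complex.exp_pi_mul_I, hIexp]; ring)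
    have hm4 : Complex.exp ((a : ℂ) * (-((Real.pi : ℂ) * I) - (Real.pi : ℂ) / 2 * I))
        = I ^ a :=
      key _ _ (by
        rw [show (-((Real.pi : ℂ) * I) - (Real.pi : ℂ) / 2 * I)
            = -((Real.pi : ℂ) * I) + -((Real.pi : ℂ) / 2 * I) by ring,
          Complex.exp_add, Complex.exp_neg, Complex.exp_neg, Complex.exp_pi_mul_I, hIexp]
        norm_num [Complex.inv_I])
    set A : ℂ := ((-1 : ℂ) ^ a - (-I) ^ a) / (2 * k) with hA
    set B : ℂ := (I ^ a - (-1 : ℂ) ^ a) / (2 * k) with hB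
    set C : ℂ := ((-I) ^ a - I ^ a) / (2 * k) with hC
    have hXa : Xa = fun ξ : ℝ => A * Complex.exp (k * ξ) + B * Complex.exp (-k * ξ) + C := by
      funext ξ
      rw [hX ξ]
      rw [integral_exp_mul_complex hc, integral_exp_mul_complex hc,
        integral_exp_mul_complex hc]
      have e1 : Complex.exp (2 * (Real.pi : ℂ) * I * (a : ℂ) * ((-1/2 + ξ/2 : ℝ) : ℂ))
          = (-1 : ℂ) ^ a * Complex.exp (k * ξ) := by
        rw [show 2 * (Real.pi : ℂ) * I * (a : ℂ) * ((-1/2 + ξ/2 : ℝ) : ℂ)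
            = (a : ℂ) * (-((Real.pi : ℂ) * I)) + k * ξ by push_cast; simp [hk_def]; ring,
          Complex.exp_add, hm2]
      have e2 : Complex.exp (2 * (Real.pi : ℂ) * I * (a : ℂ) * ((1/2 - ξ/2 : ℝ) : ℂ))
          = (-1 : ℂ) ^ a * Complex.exp (-k * ξ) := by
        rw [show 2 * (Real.pi : ℂ) * I * (a : ℂ) * ((1/2 - ξ/2 : ℝ) : ℂ)
            = (a : ℂ) * ((Real.pi : ℂ) * I) + -k * ξ by push_cast; simp [hk_def]; ring,
          Complex.exp_add, hm1]
      have e3 : Complex.exp (2 * (Real.pi : ℂ) * I * (a : ℂ) * ((3/4 + ξ/2 : ℝ) : ℂ))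
          = (-I) ^ a * Complex.exp (k * ξ) := by
        rw [show 2 * (Real.pi : ℂ) * I * (a : ℂ) * ((3/4 + ξ/2 : ℝ) : ℂ)
            = (a : ℂ) * ((Real.pi : ℂ) * I + (Real.pi : ℂ) / 2 * I) + k * ξ by
              push_cast; simp [hk_def]; ring,
          Complex.exp_add, hm3]
      have e4 : Complex.exp (2 * (Real.pi : ℂ) * I * (a : ℂ) * ((3/4 : ℝ) : ℂ))
          = (-I) ^ a := by
        rw [show 2 * (Real.pi : ℂ) * I * (a : ℂ) * ((3/4 : ℝ) : ℂ)
            = (a : ℂ) * ((Real.pi : ℂ) * I + (Real.pi : ℂ) / 2 * I) by push_cast; ring, hm3]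
      have e5 : Complex.exp (2 * (Real.pi : ℂ) * I * (a : ℂ) * ((-3/4 : ℝ) : ℂ))
          = I ^ a := by
        rw [show 2 * (Real.pi : ℂ) * I * (a : ℂ) * ((-3/4 : ℝ) : ℂ)
            = (a : ℂ) * (-((Real.pi : ℂ) * I) - (Real.pi : ℂ) / 2 * I) by push_cast; ring, hm4]
      have e6 : Complex.exp (2 * (Real.pi : ℂ) * I * (a : ℂ) * ((-3/4 - ξ/2 : ℝ) : ℂ))
          = I ^ a * Complex.exp (-k * ξ) := by
        rw [show 2 * (Real.pi : ℂ) * I * (a : ℂ) * ((-3/4 - ξ/2 : ℝ) : ℂ)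
            = (a : ℂ) * (-((Real.pi : ℂ) * I) - (Real.pi : ℂ) / 2 * I) + -k * ξ by
              push_cast; simp [hk_def]; ring,
          Complex.exp_add, hm4]
      rw [e1, e2, e3, e4, e5, e6, hA, hB, hC, hk_def]
      field_simp
      ring
    rw [hXa, iter_aux]
    simp only [Nat.succ_ne_zero, if_false, add_zero, Complex.exp_zero, mul_one,
      Complex.ofReal_zero, mul_zero, zero_mul, Nat.add_sub_cancel]
    rw [hA, hB]
    have hk2 : (2 : ℂ) * k ≠ 0 := by simpa using hk
    field_simp
    ring
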